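/- For a primitive ℓ-th root of unity μ ∈ k (ℓ ≥ 2), the fixed ring of the first Weyl algebra A_1(k) under the automorphism p ↦ μp, q ↦ μ⁻¹q is not isomorphic to A_1(k). -/

import Mathlib

set_option linter.unusedSectionVars false
set_option maxHeartbeats 1000000

/-- Presentation relation of the first Weyl algebra: `q * p = p * q + 1`,
where `p` is the generator `0` and `q` the generator `1`. -/
inductive WeylRel (k : Type*) [CommRing k] :
    FreeAlgebra k (Fin 2) → FreeAlgebra k (Fin 2) → Prop
  | qp : WeylRel k (FreeAlgebra.ι k 1 * FreeAlgebra.ι k 0)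
      (FreeAlgebra.ι k 0 * FreeAlgebra.ι k 1 + 1)

/-- The first Weyl algebra `A₁(k)`, generated by `p, q` with `qp - pq = 1`. -/
abbrev WeylAlgebra (k : Type*) [CommRing k] : Type _ := RingQuot (WeylRel k)

/-- The generator `p` of the first Weyl algebra. -/
noncomputable def Wp (k : Type*) [CommRing k] : WeylAlgebra k :=
  RingQuot.mkAlgHom k (WeylRel k) (FreeAlgebra.ι k 0)

/-- The generator `q` of the first Weyl algebra. -/
noncomputable def Wq (k : Type*) [CommRing k] : WeylAlgebra k :=
  RingQuot.mkAlgHom k (WeylRel k) (FreeAlgebra.ι k 1)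

noncomputable section
namespace WeylNotIsoAux



open Polynomial

variable {k : Type*} [Field k] [CharZero k]

/-- The operator `f ↦ f - μ·f(X+1)` on polynomials. -/
def Nmap (μ : k) : Polynomial k →ₗ[k] Polynomial k :=
  LinearMap.id - μ • (Polynomial.taylor 1)

lemma Nmap_apply (μ : k) (f : Polynomial k) :
    Nmap μ f = f - μ • taylor 1 f := rfl

lemma taylor_leadingCoeff (r : k) (f : Polynomial k) :
    (taylor r f).leadingCoeff = f.leadingCoeff := by
  rw [taylor_apply, Polynomial.leadingCoeff_comp (by simp),
    leadingCoeff_X_add_C, one_pow, mul_one]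

lemma Nmap_injective {μ : k} (h1 : μ ≠ 1) : Function.Injective (Nmap μ) := by
  intro f g hfg
  by_contra hne
  set e := f - g with he
  have he0 : e ≠ 0 := sub_ne_zero.2 hne
  have hN : Nmap μ e = 0 := by rw [map_sub, hfg, sub_self]
  have heq : e = μ • taylor 1 e := by
    rw [Nmap_apply] at hN
    exact sub_eq_zero.mp hN
  have hdeg : (taylor (1:k) e).natDegree = e.natDegree := natDegree_taylor e 1
  have hlc : (taylor (1:k) e).coeff e.natDegree = e.leadingCoeff := by
    rw [← hdeg, coeff_natDegree, taylor_leadingCoeff]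
  have hstep := congrArg (fun q : Polynomial k => q.coeff e.natDegree) heq
  simp only [coeff_smul, smul_eq_mul, hlc, coeff_natDegree] at hstep
  have hlc0 : e.leadingCoeff ≠ 0 := leadingCoeff_ne_zero.2 he0
  exact h1 (mul_right_cancel₀ hlc0 (by rw [one_mul, ← hstep]))

lemma Nmap_surj_aux {μ : k} (h1 : μ ≠ 1) :
    ∀ (n : ℕ) (g : Polynomial k), g.natDegree < n → ∃ f, Nmap μ f = g := by
  have hc : (1 - μ) ≠ 0 := sub_ne_zero.2 (Ne.symm h1)
  intro n
  induction n with
  | zero => intro g h; exact absurd h (Nat.not_lt_zero _)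
  | succ n ih =>
    intro g hg
    by_cases hgt : taylor (1:k) g = g
    · refine ⟨(1-μ)⁻¹ • g, ?_⟩
      rw [Nmap_apply, map_smul, hgt, smul_smul, ← sub_smul]
      have hsc : (1-μ)⁻¹ - μ * (1-μ)⁻¹ = 1 := by field_simp
      rw [hsc, one_smul]
    · by_cases hg0 : g = 0
      · exact ⟨0, by rw [hg0, map_zero]⟩
      have ht0 : taylor (1:k) g ≠ 0 := fun h =>
        hg0 (taylor_injective 1 (by rw [h, map_zero]))
      have hdegeq : (taylor (1:k) g).degree = g.degree := by
        rw [degree_eq_natDegree ht0, degree_eq_natDegree hg0, natDegree_taylor]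
      have hlt : (taylor (1:k) g - g).degree < g.degree := by
        have := degree_sub_lt hdegeq ht0 (taylor_leadingCoeff 1 g)
        rwa [hdegeq] at this
      have hrne : taylor (1:k) g - g ≠ 0 := sub_ne_zero.2 hgt
      have hnat : (taylor (1:k) g - g).natDegree < g.natDegree :=
        natDegree_lt_natDegree hrne hlt
      set r := (μ * (1-μ)⁻¹) • (taylor (1:k) g - g) with hr
      have hrdeg : r.natDegree < n :=
        lt_of_le_of_lt (natDegree_smul_le _ _) (by omega)
      obtain ⟨f', hf'⟩ := ih r hrdeg
      refine ⟨(1-μ)⁻¹ • g + f', ?_⟩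
      rw [map_add, hf', Nmap_apply, map_smul, smul_smul, hr, smul_sub,
        sub_add_sub_cancel, ← sub_smul]
      have hsc : (1-μ)⁻¹ - μ * (1-μ)⁻¹ = 1 := by field_simp
      rw [hsc, one_smul]

lemma Nmap_surjective {μ : k} (h1 : μ ≠ 1) : Function.Surjective (Nmap μ) :=
  fun g => Nmap_surj_aux h1 (g.natDegree + 1) g (Nat.lt_succ_self _)

/-- Inverse of `Nmap`. -/
def Ninv (μ : k) (f : Polynomial k) : Polynomial k := Function.invFun (Nmap μ) f

lemma Nmap_Ninv {μ : k} (h1 : μ ≠ 1) (f : Polynomial k) : Nmap μ (Ninv μ f) = f :=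
  Function.invFun_eq (Nmap_surjective h1 f)

lemma Ninv_Nmap {μ : k} (h1 : μ ≠ 1) (f : Polynomial k) : Ninv μ (Nmap μ f) = f :=
  Nmap_injective h1 (by rw [Nmap_Ninv h1])

/-- The regularized sum `Σ_{n≥0} μ^n f(n)`. -/
def Zhat (μ : k) (f : Polynomial k) : k := (Ninv μ f).eval 0

lemma Zhat_add {μ : k} (h1 : μ ≠ 1) (f g : Polynomial k) :
    Zhat μ (f + g) = Zhat μ f + Zhat μ g := by
  have : Ninv μ (f + g) = Ninv μ f + Ninv μ g :=
    Nmap_injective h1 (by rw [Nmap_Ninv h1, map_add, Nmap_Ninv h1, Nmap_Ninv h1])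
  rw [Zhat, this, eval_add]; rfl

lemma Zhat_smul {μ : k} (h1 : μ ≠ 1) (c : k) (f : Polynomial k) :
    Zhat μ (c • f) = c * Zhat μ f := by
  have : Ninv μ (c • f) = c • Ninv μ f :=
    Nmap_injective h1 (by rw [Nmap_Ninv h1, map_smul, Nmap_Ninv h1])
  rw [Zhat, this, eval_smul, smul_eq_mul]; rfl

lemma Zhat_rel {μ : k} (h1 : μ ≠ 1) (f : Polynomial k) :
    Zhat μ f = f.coeff 0 + μ * Zhat μ (taylor 1 f) := by
  set h := Ninv μ f with hh
  have hNh : Nmap μ h = f := Nmap_Ninv h1 f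
  have ht : taylor (1:k) f = Nmap μ (taylor 1 h) := by
    rw [← hNh, Nmap_apply, Nmap_apply, map_sub, map_smul]
  have hz2 : Zhat μ (taylor 1 f) = h.eval 1 := by
    rw [ht, Zhat, Ninv_Nmap h1]
    show (taylor (1:k) h).eval 0 = h.eval 1
    rw [taylor_eval, zero_add]
  have hc0 : f.coeff 0 = h.eval 0 - μ * h.eval 1 := by
    rw [coeff_zero_eq_eval_zero, ← hNh, Nmap_apply, eval_sub, eval_smul,
      smul_eq_mul, taylor_eval, zero_add]
  rw [hz2, hc0]
  have : Zhat μ f = h.eval 0 := rfl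
  rw [this]; ring

lemma Zhat_one {μ : k} (h1 : μ ≠ 1) : Zhat μ 1 = (1 - μ)⁻¹ := by
  have := Zhat_rel h1 (1 : Polynomial k)
  rw [show (taylor (1:k) (1 : Polynomial k)) = 1 by simp] at this
  have hc : (1 - μ) ≠ 0 := sub_ne_zero.2 (Ne.symm h1)
  norm_num [coeff_one] at this
  field_simp
  linear_combination this






open Polynomial

variable {k : Type*} [Field k] [CharZero k]

/-- multiplication by X -/
def Pop (k : Type*) [Field k] : Module.End k (Polynomial k) :=
  LinearMap.mulLeft k (X : Polynomial k)

/-- differentiation -/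
def Qop (k : Type*) [Field k] : Module.End k (Polynomial k) :=
  Polynomial.derivative

lemma comm_rel : (Qop k) * (Pop k) = (Pop k) * (Qop k) + 1 := by
  apply LinearMap.ext; intro f
  simp only [Qop, Pop, Module.End.mul_apply, LinearMap.add_apply, Module.End.one_apply,
    LinearMap.mulLeft_apply]
  rw [derivative_mul, derivative_X, one_mul]
  ring

/-- `T` is a band operator with symbol family `p`. -/
def IsBand (T : Module.End k (Polynomial k)) (p : ℤ → Polynomial k) : Prop :=
  (∀ n m : ℕ, (T (X ^ n)).coeff m = (p ((m : ℤ) - n)).eval (n : k)) ∧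
  (∀ (d : ℤ) (n : ℕ), (n : ℤ) + d < 0 → (p d).eval (n : k) = 0) ∧
  (∃ D : ℕ, ∀ d : ℤ, (D : ℤ) < |d| → p d = 0)

lemma poly_eq_of_nat_eval {f g : Polynomial k}
    (h : ∀ n : ℕ, f.eval (n : k) = g.eval (n : k)) : f = g := by
  have hz : f - g = 0 := by
    apply Polynomial.eq_zero_of_infinite_isRoot
    apply Set.Infinite.mono (s := Set.range (fun n : ℕ => (n : k)))
    · rintro x ⟨n, rfl⟩
      simp only [Set.mem_setOf_eq, IsRoot, eval_sub, h n, sub_self]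
    · exact Set.infinite_range_of_injective Nat.cast_injective
  linear_combination hz

lemma isBand_unique {T : Module.End k (Polynomial k)} {p q : ℤ → Polynomial k}
    (hp : IsBand T p) (hq : IsBand T q) : p = q := by
  funext d
  apply poly_eq_of_nat_eval
  intro n
  rcases lt_or_ge ((n : ℤ) + d) 0 with h | h
  · rw [hp.2.1 d n h, hq.2.1 d n h]
  · obtain ⟨m, hm⟩ : ∃ m : ℕ, (m : ℤ) = (n : ℤ) + d :=
      ⟨((n : ℤ) + d).toNat, Int.toNat_of_nonneg h⟩
    have hd : (m : ℤ) - n = d := by omega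
    have h1 := hp.1 n m
    have h2 := hq.1 n m
    rw [hd] at h1 h2
    rw [← h1, h2]

lemma band_algebraMap (r : k) :
    IsBand (algebraMap k (Module.End k (Polynomial k)) r)
      (fun d => if d = 0 then C r else 0) := by
  refine ⟨fun n m => ?_, fun d n hd => ?_, ⟨0, fun d hd => ?_⟩⟩
  · rw [Module.algebraMap_end_apply, coeff_smul, coeff_X_pow, smul_eq_mul]
    by_cases h : m = n
    · simp [h]
    · have : ¬ ((m : ℤ) - n = 0) := by omega
      simp [h, this]
  · have : ¬ (d = 0) := by omega
    simp [this]
  · have : ¬ (d = 0) := by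
      intro h; rw [h] at hd; simp at hd
    simp [this]

lemma band_one : IsBand (1 : Module.End k (Polynomial k))
    (fun d => if d = 0 then C 1 else 0) := by
  have := band_algebraMap (k := k) 1
  rwa [map_one] at this

lemma band_P : IsBand (Pop k) (fun d => if d = 1 then 1 else 0) := by
  refine ⟨fun n m => ?_, fun d n hd => ?_, ⟨1, fun d hd => ?_⟩⟩
  · rw [Pop, LinearMap.mulLeft_apply, ← pow_succ', coeff_X_pow]
    by_cases h : m = n + 1
    · have h2 : (m : ℤ) - n = 1 := by omega
      simp [h, h2]
    · have h2 : ¬ ((m : ℤ) - n = 1) := by omega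
      simp [h, h2]
  · have : ¬ (d = 1) := by omega
    simp [this]
  · have : ¬ (d = 1) := by
      intro h; rw [h] at hd; simp at hd
    simp [this]

lemma band_Q : IsBand (Qop k) (fun d => if d = -1 then X else 0) := by
  refine ⟨fun n m => ?_, fun d n hd => ?_, ⟨1, fun d hd => ?_⟩⟩
  · rw [Qop]
    show (derivative (X ^ n : Polynomial k)).coeff m = _
    rw [derivative_X_pow, coeff_C_mul, coeff_X_pow]
    rcases Nat.eq_zero_or_pos n with h0 | h0
    · subst h0
      have : ¬ ((m : ℤ) - 0 = -1) := by omega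
      simp [this]
    · by_cases h : m = n - 1
      · have h2 : (m : ℤ) - n = -1 := by omega
        simp only []
        rw [if_pos h2, eval_X]
        simp [h]
      · have h2 : ¬ ((m : ℤ) - n = -1) := by omega
        simp [h, h2]
  · by_cases h : d = -1
    · subst h
      have : n = 0 := by omega
      simp [this]
    · simp [h]
  · have : ¬ (d = -1) := by
      intro h; rw [h] at hd; simp at hd
    simp [this]

lemma band_add {A B : Module.End k (Polynomial k)} {pa pb : ℤ → Polynomial k}
    (ha : IsBand A pa) (hb : IsBand B pb) :
    IsBand (A + B) (fun d => pa d + pb d) := by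
  obtain ⟨Da, hDa⟩ := ha.2.2
  obtain ⟨Db, hDb⟩ := hb.2.2
  refine ⟨fun n m => ?_, fun d n hd => ?_, ⟨Da + Db, fun d hd => ?_⟩⟩
  · rw [LinearMap.add_apply, coeff_add, ha.1 n m, hb.1 n m, eval_add]
  · rw [eval_add, ha.2.1 d n hd, hb.2.1 d n hd, add_zero]
  · show pa d + pb d = 0
    rw [hDa d (by omega), hDb d (by omega), add_zero]

lemma band_smul {A : Module.End k (Polynomial k)} {pa : ℤ → Polynomial k}
    (c : k) (ha : IsBand A pa) :
    IsBand (c • A) (fun d => C c * pa d) := by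
  obtain ⟨Da, hDa⟩ := ha.2.2
  refine ⟨fun n m => ?_, fun d n hd => ?_, ⟨Da, fun d hd => ?_⟩⟩
  · rw [LinearMap.smul_apply, coeff_smul, ha.1 n m, eval_mul, eval_C, smul_eq_mul]
  · rw [eval_mul, ha.2.1 d n hd, mul_zero]
  · show C c * pa d = 0
    rw [hDa d hd, mul_zero]

lemma coeff_apply_eq_sum (A : Module.End k (Polynomial k)) (f : Polynomial k)
    (M m : ℕ) (hf : f.natDegree < M) :
    (A f).coeff m = ∑ i ∈ Finset.range M, f.coeff i * (A (X ^ i)).coeff m := by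
  conv_lhs => rw [Polynomial.as_sum_range' f M hf]
  rw [map_sum, finset_sum_coeff]
  refine Finset.sum_congr rfl fun i _ => ?_
  rw [← Polynomial.smul_X_eq_monomial, map_smul, coeff_smul, smul_eq_mul]

lemma band_mul {A B : Module.End k (Polynomial k)} {pa pb : ℤ → Polynomial k}
    (ha : IsBand A pa) (hb : IsBand B pb) :
    ∃ pc, IsBand (A * B) pc := by
  obtain ⟨Da, hDa⟩ := ha.2.2
  obtain ⟨Db, hDb⟩ := hb.2.2
  set D : ℕ := Da + Db with hD
  set pc : ℤ → Polynomial k := fun d =>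
    ∑ e ∈ Finset.Icc (-(D : ℤ)) (D : ℤ), (taylor ((e : ℤ) : k) (pa (d - e))) * pb e with hpc
  refine ⟨pc, fun n m => ?_, fun d n hd => ?_, ⟨D, fun d hd => ?_⟩⟩
  · -- entries
    have hBdeg : (B (X ^ n)).natDegree < n + D + 1 := by
      have : (B (X ^ n)).natDegree ≤ n + Db := by
        rw [natDegree_le_iff_coeff_eq_zero]
        intro N hN
        rw [hb.1 n N, hDb ((N : ℤ) - n) (by
          rw [abs_of_nonneg (by omega)]; omega)]
        simp
      omega
    rw [Module.End.mul_apply, coeff_apply_eq_sum A (B (X ^ n)) (n + D + 1) m hBdeg]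
    have hL : ∀ i ∈ Finset.range (n + D + 1),
        (B (X ^ n)).coeff i * (A (X ^ i)).coeff m
        = (pb ((i : ℤ) - n)).eval (n : k) * (pa ((m : ℤ) - i)).eval (i : k) := by
      intro i _
      rw [hb.1 n i, ha.1 i m]
    rw [Finset.sum_congr rfl hL]
    -- RHS
    rw [hpc]
    simp only [eval_finset_sum, eval_mul]
    have hR : ∀ e ∈ Finset.Icc (-(D : ℤ)) (D : ℤ),
        (taylor ((e : ℤ) : k) (pa ((m : ℤ) - n - e))).eval (n : k) * (pb e).eval (n : k)
        = (pa ((m : ℤ) - n - e)).eval ((n : k) + (e : k)) * (pb e).eval (n : k) := by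
      intro e _
      rw [taylor_eval]
    rw [Finset.sum_congr rfl hR]
    -- reindex LHS to Icc (-n) D
    have step1 : ∑ i ∈ Finset.range (n + D + 1),
        (pb ((i : ℤ) - n)).eval (n : k) * (pa ((m : ℤ) - i)).eval (i : k)
        = ∑ e ∈ Finset.Icc (-(n : ℤ)) (D : ℤ),
          (pa ((m : ℤ) - n - e)).eval ((n : k) + (e : k)) * (pb e).eval (n : k) := by
      refine Finset.sum_nbij' (fun i => (i : ℤ) - n) (fun e => ((n : ℤ) + e).toNat)
        ?_ ?_ ?_ ?_ ?_
      · intro i hi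
        simp only [Finset.mem_range] at hi
        simp only [Finset.mem_Icc]
        omega
      · intro e he
        simp only [Finset.mem_Icc] at he
        simp only [Finset.mem_range]
        omega
      · intro i hi; omega
      · intro e he
        simp only [Finset.mem_Icc] at he
        omega
      · intro i hi
        have h1 : (m : ℤ) - n - ((i : ℤ) - n) = (m : ℤ) - i := by ring
        have h2 : (n : k) + (((i : ℤ) - (n : ℤ) : ℤ) : k) = (i : k) := by push_cast; ring
        rw [h1, h2, mul_comm]
    rw [step1]
    -- compare over common superset
    have hsub1 : Finset.Icc (-(n : ℤ)) (D : ℤ) ⊆ Finset.Icc (-(n : ℤ) - D) (D : ℤ) := by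
      intro e he
      simp only [Finset.mem_Icc] at he ⊢
      omega
    have hsub2 : Finset.Icc (-(D : ℤ)) (D : ℤ) ⊆ Finset.Icc (-(n : ℤ) - D) (D : ℤ) := by
      intro e he
      simp only [Finset.mem_Icc] at he ⊢
      omega
    rw [Finset.sum_subset hsub1 ?_, Finset.sum_subset hsub2 ?_]
    · intro e heS he
      simp only [Finset.mem_Icc] at heS he
      have habs : (Db : ℤ) < |e| := by
        rw [abs_of_nonpos (by omega)]; omega
      rw [hDb e habs]
      simp
    · intro e heS he
      simp only [Finset.mem_Icc] at heS he
      have hlt : (n : ℤ) + e < 0 := by omega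
      rw [hb.2.1 e n hlt, mul_zero]
  · -- vanishing
    rw [hpc]
    simp only [eval_finset_sum, eval_mul]
    apply Finset.sum_eq_zero
    intro e he
    rcases lt_or_ge ((n : ℤ) + e) 0 with h | h
    · rw [hb.2.1 e n h, mul_zero]
    · obtain ⟨n', hn'⟩ : ∃ n' : ℕ, (n' : ℤ) = (n : ℤ) + e :=
        ⟨((n : ℤ) + e).toNat, Int.toNat_of_nonneg h⟩
      have hcast : (n : k) + (e : k) = (n' : k) := by
        have h5 := congrArg (fun z : ℤ => (z : k)) hn'
        push_cast at h5
        exact h5.symm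
      rw [taylor_eval, hcast, ha.2.1 (d - e) n' (by omega), zero_mul]
  · -- support bound
    rw [hpc]
    apply Finset.sum_eq_zero
    intro e he
    simp only [Finset.mem_Icc] at he
    by_cases hpbe : pb e = 0
    · rw [hpbe, mul_zero]
    · have habs : |e| ≤ (Db : ℤ) := by
        by_contra hc
        exact hpbe (hDb e (by omega))
      have : (Da : ℤ) < |d - e| := by
        have h1 := abs_sub_abs_le_abs_sub d e
        omega
      rw [hDa (d - e) this, map_zero, zero_mul]



section Weyl

variable {k : Type*} [Field k] [CharZero k]

/-- The representation of the Weyl algebra on `k[X]`. -/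
def Theta (k : Type*) [Field k] [CharZero k] :
    WeylAlgebra k →ₐ[k] Module.End k (Polynomial k) :=
  RingQuot.liftAlgHom k ⟨FreeAlgebra.lift k (fun i : Fin 2 => if i = 0 then Pop k else Qop k), by
    rintro x y ⟨⟩
    have e1 : ((1 : Fin 2) = 0) = False := by simp
    simp only [map_mul, map_add, map_one, FreeAlgebra.lift_ι_apply, eq_self_iff_true,
      if_true, e1, if_false]
    exact comm_rel⟩

lemma Theta_Wp : Theta k (Wp k) = Pop k := by
  rw [Wp, Theta, RingQuot.liftAlgHom_mkAlgHom_apply, FreeAlgebra.lift_ι_apply, if_pos rfl]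

lemma Theta_Wq : Theta k (Wq k) = Qop k := by
  rw [Wq, Theta, RingQuot.liftAlgHom_mkAlgHom_apply, FreeAlgebra.lift_ι_apply,
    if_neg (by decide : ¬ ((1 : Fin 2) = 0))]

lemma hasBand (y : WeylAlgebra k) : ∃ p, IsBand (Theta k y) p := by
  obtain ⟨a, rfl⟩ := RingQuot.mkAlgHom_surjective k (WeylRel k) y
  induction a using FreeAlgebra.induction with
  | grade0 r =>
    simp only [AlgHom.commutes]
    exact ⟨_, band_algebraMap r⟩
  | grade1 i =>
    by_cases hi : i = 0
    · subst hi
      exact ⟨_, by rw [show RingQuot.mkAlgHom k (WeylRel k) (FreeAlgebra.ι k 0) = Wp k from rfl,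
        Theta_Wp]; exact band_P⟩
    · rw [Fin.eq_one_of_ne_zero i hi]
      exact ⟨_, by rw [show RingQuot.mkAlgHom k (WeylRel k) (FreeAlgebra.ι k 1) = Wq k from rfl,
        Theta_Wq]; exact band_Q⟩
  | mul a b ha hb =>
    rw [map_mul, map_mul]
    obtain ⟨pa, hpa⟩ := ha
    obtain ⟨pb, hpb⟩ := hb
    exact band_mul hpa hpb
  | add a b ha hb =>
    rw [map_add, map_add]
    obtain ⟨pa, hpa⟩ := ha
    obtain ⟨pb, hpb⟩ := hb
    exact ⟨_, band_add hpa hpb⟩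

/-- The canonical symbol family of a Weyl algebra element. -/
def fam (y : WeylAlgebra k) : ℤ → Polynomial k := (hasBand y).choose

lemma fam_spec (y : WeylAlgebra k) : IsBand (Theta k y) (fam y) := (hasBand y).choose_spec

lemma fam_eq {y : WeylAlgebra k} {p : ℤ → Polynomial k} (h : IsBand (Theta k y) p) :
    fam y = p :=
  isBand_unique (fam_spec y) h

/-- The `μ`-twisted regularized trace on the Weyl algebra. -/
def tau (μ : k) (y : WeylAlgebra k) : k := Zhat μ (fam y 0)

variable {μ : k}

lemma tau_add (h1 : μ ≠ 1) (a b : WeylAlgebra k) :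
    tau μ (a + b) = tau μ a + tau μ b := by
  have hf : fam (a + b) = fun d => fam a d + fam b d :=
    fam_eq (by rw [map_add]; exact band_add (fam_spec a) (fam_spec b))
  rw [tau, hf]
  exact Zhat_add h1 _ _

lemma tau_smul (h1 : μ ≠ 1) (c : k) (a : WeylAlgebra k) :
    tau μ (c • a) = c * tau μ a := by
  have hf : fam (c • a) = fun d => C c * fam a d :=
    fam_eq (by rw [map_smul]; exact band_smul c (fam_spec a))
  rw [tau, hf]
  show Zhat μ (C c * fam a 0) = c * Zhat μ (fam a 0)
  rw [← Polynomial.smul_eq_C_mul, Zhat_smul h1]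

lemma tau_one (h1 : μ ≠ 1) : tau μ (1 : WeylAlgebra k) = (1 - μ)⁻¹ := by
  have hf : fam (1 : WeylAlgebra k) = fun d => if d = 0 then C 1 else 0 :=
    fam_eq (by rw [map_one]; exact band_one)
  rw [tau, hf]
  show Zhat μ (if (0 : ℤ) = 0 then C 1 else 0) = (1 - μ)⁻¹
  rw [if_pos rfl, map_one]
  exact Zhat_one h1

lemma tau_P (h1 : μ ≠ 1) (y : WeylAlgebra k) :
    tau μ (Wp k * y) = μ * tau μ (y * Wp k) := by
  set p := fam y with hpdef
  have hspec := fam_spec y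
  obtain ⟨D, hD⟩ := hspec.2.2
  have h1b : IsBand (Theta k (Wp k * y)) (fun d => p (d - 1)) := by
    rw [map_mul, Theta_Wp]
    refine ⟨fun n m => ?_, fun d n hd => ?_, ⟨D + 1, fun d hd => ?_⟩⟩
    · rw [Module.End.mul_apply, Pop, LinearMap.mulLeft_apply]
      cases m with
      | zero =>
        rw [mul_coeff_zero, coeff_X_zero, zero_mul]
        show (0 : k) = (p (((0 : ℕ) : ℤ) - n - 1)).eval (n : k)
        exact (hspec.2.1 _ n (by omega)).symm
      | succ m' =>
        rw [coeff_X_mul, hspec.1 n m']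
        show (p ((m' : ℤ) - n)).eval (n : k) = (p (((m' + 1 : ℕ) : ℤ) - n - 1)).eval (n : k)
        congr 2
        push_cast
        ring
    · show (p (d - 1)).eval (n : k) = 0
      exact hspec.2.1 (d - 1) n (by omega)
    · show p (d - 1) = 0
      refine hD (d - 1) ?_
      rcases abs_cases d with ⟨he, _⟩ | ⟨he, _⟩ <;>
        rcases abs_cases (d - 1) with ⟨h2, _⟩ | ⟨h2, _⟩ <;> omega
  have h2b : IsBand (Theta k (y * Wp k)) (fun d => taylor 1 (p (d - 1))) := by
    rw [map_mul, Theta_Wp]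
    refine ⟨fun n m => ?_, fun d n hd => ?_, ⟨D + 1, fun d hd => ?_⟩⟩
    · rw [Module.End.mul_apply, Pop, LinearMap.mulLeft_apply, ← pow_succ', hspec.1 (n + 1) m]
      show (p ((m : ℤ) - (n + 1 : ℕ))).eval ((n + 1 : ℕ) : k)
        = (taylor 1 (p ((m : ℤ) - n - 1))).eval (n : k)
      rw [taylor_eval]
      have hidx : (m : ℤ) - ((n + 1 : ℕ) : ℤ) = (m : ℤ) - n - 1 := by push_cast; ring
      have hpt : (((n + 1 : ℕ) : ℤ) : k) = (n : k) + 1 := by push_cast; ring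
      rw [hidx]
      push_cast
      ring_nf
    · show (taylor (1 : k) (p (d - 1))).eval (n : k) = 0
      rw [taylor_eval]
      have hpt : (n : k) + 1 = ((n + 1 : ℕ) : k) := by push_cast; ring
      rw [hpt]
      exact hspec.2.1 (d - 1) (n + 1) (by omega)
    · show taylor (1 : k) (p (d - 1)) = 0
      have : p (d - 1) = 0 := by
        refine hD (d - 1) ?_
        rcases abs_cases d with ⟨he, _⟩ | ⟨he, _⟩ <;>
          rcases abs_cases (d - 1) with ⟨h2, _⟩ | ⟨h2, _⟩ <;> omega
      rw [this, map_zero]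
  rw [tau, tau, fam_eq h1b, fam_eq h2b]
  show Zhat μ (p ((0 : ℤ) - 1)) = μ * Zhat μ (taylor 1 (p ((0 : ℤ) - 1)))
  have h0 : (p ((0 : ℤ) - 1)).coeff 0 = 0 := by
    rw [coeff_zero_eq_eval_zero]
    have := hspec.2.1 ((0 : ℤ) - 1) 0 (by omega)
    simpa using this
  rw [Zhat_rel h1 (p ((0 : ℤ) - 1)), h0, zero_add]

lemma tau_Q (h1 : μ ≠ 1) (y : WeylAlgebra k) :
    tau μ (y * Wq k) = μ * tau μ (Wq k * y) := by
  set p := fam y with hpdef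
  have hspec := fam_spec y
  obtain ⟨D, hD⟩ := hspec.2.2
  have habs : ∀ d : ℤ, ((D + 1 : ℕ) : ℤ) < |d| → p (d + 1) = 0 := by
    intro d hd
    refine hD (d + 1) ?_
    rcases abs_cases d with ⟨he, _⟩ | ⟨he, _⟩ <;>
      rcases abs_cases (d + 1) with ⟨h2, _⟩ | ⟨h2, _⟩ <;> omega
  have h1b : IsBand (Theta k (Wq k * y))
      (fun d => (X + C ((d : k) + 1)) * p (d + 1)) := by
    rw [map_mul, Theta_Wq]
    refine ⟨fun n m => ?_, fun d n hd => ?_, ⟨D + 1, fun d hd => ?_⟩⟩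
    · rw [Module.End.mul_apply]
      show (derivative ((Theta k y) (X ^ n))).coeff m = _
      rw [coeff_derivative, hspec.1 n (m + 1)]
      show (p (((m + 1 : ℕ) : ℤ) - n)).eval (n : k) * ((m : k) + 1)
        = ((X + C ((((m : ℤ) - n : ℤ) : k) + 1)) * p ((m : ℤ) - n + 1)).eval (n : k)
      rw [eval_mul, eval_add, eval_X, eval_C]
      have hidx : ((m + 1 : ℕ) : ℤ) - n = (m : ℤ) - n + 1 := by push_cast; ring
      rw [hidx]
      push_cast
      ring
    · show Polynomial.eval (n : k) ((X + C (((d : ℤ) : k) + 1)) * p (d + 1)) = 0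
      rw [eval_mul, eval_add, eval_X, eval_C]
      rcases lt_or_ge ((n : ℤ) + (d + 1)) 0 with h | h
      · rw [hspec.2.1 (d + 1) n h, mul_zero]
      · have hz : (n : ℤ) + d + 1 = 0 := by omega
        have : (n : k) + (((d : ℤ)) : k) + 1 = 0 := by
          have := congrArg (fun z : ℤ => (z : k)) hz
          push_cast at this
          linear_combination this
        rw [show (n : k) + ((((d : ℤ)) : k) + 1) = (n : k) + (((d : ℤ)) : k) + 1 by ring, this,
          zero_mul]
    · show (X + C (((d : ℤ) : k) + 1)) * p (d + 1) = 0
      rw [habs d hd, mul_zero]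
  have h2b : IsBand (Theta k (y * Wq k))
      (fun d => X * taylor (-1) (p (d + 1))) := by
    rw [map_mul, Theta_Wq]
    refine ⟨fun n m => ?_, fun d n hd => ?_, ⟨D + 1, fun d hd => ?_⟩⟩
    · rw [Module.End.mul_apply]
      show ((Theta k y) (derivative (X ^ n))).coeff m = _
      rw [derivative_X_pow, ← Polynomial.smul_eq_C_mul, map_smul, coeff_smul, smul_eq_mul,
        hspec.1 (n - 1) m]
      show (n : k) * (p ((m : ℤ) - ((n - 1 : ℕ) : ℤ))).eval (((n - 1 : ℕ)) : k)
        = (X * taylor (-1) (p ((m : ℤ) - n + 1))).eval (n : k)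
      rw [eval_mul, eval_X, taylor_eval]
      cases n with
      | zero => simp
      | succ n' =>
        have hidx : (m : ℤ) - ((n' + 1 - 1 : ℕ) : ℤ) = (m : ℤ) - (n' + 1 : ℕ) + 1 := by
          push_cast; ring
        have hpt : (((n' + 1 - 1 : ℕ)) : k) = (((n' + 1 : ℕ)) : k) + (-1) := by
          push_cast; ring
        rw [hidx, hpt]
    · show Polynomial.eval (n : k) (X * taylor ((-1 : k)) (p (d + 1))) = 0
      rw [eval_mul, eval_X, taylor_eval]
      cases n with
      | zero => simp
      | succ n' =>
        have hpt : (((n' + 1 : ℕ)) : k) + (-1) = ((n' : ℕ) : k) := by push_cast; ring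
        rw [hpt, hspec.2.1 (d + 1) n' (by omega), mul_zero]
    · show X * taylor ((-1 : k)) (p (d + 1)) = 0
      rw [habs d hd, map_zero, mul_zero]
  rw [tau, tau, fam_eq h1b, fam_eq h2b]
  show Zhat μ (X * taylor (-1) (p ((0 : ℤ) + 1)))
    = μ * Zhat μ ((X + C ((((0 : ℤ)) : k) + 1)) * p ((0 : ℤ) + 1))
  have hcoeff : (X * taylor (-1) (p ((0 : ℤ) + 1))).coeff 0 = 0 := by
    rw [coeff_zero_eq_eval_zero, eval_mul, eval_X, zero_mul]
  have htay : taylor (1 : k) (X * taylor (-1) (p ((0 : ℤ) + 1)))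
      = (X + C ((((0 : ℤ)) : k) + 1)) * p ((0 : ℤ) + 1) := by
    rw [taylor_mul, taylor_X, taylor_taylor]
    norm_num
  rw [Zhat_rel h1 (X * taylor (-1) (p ((0 : ℤ) + 1))), hcoeff, zero_add, htay]

lemma tau_twist (h1 : μ ≠ 1) (h0 : μ ≠ 0)
    (φ : WeylAlgebra k ≃ₐ[k] WeylAlgebra k)
    (hp : φ (Wp k) = μ • Wp k) (hq : φ (Wq k) = μ⁻¹ • Wq k) :
    ∀ x y : WeylAlgebra k, tau μ (x * y) = tau μ (y * φ x) := by
  have main : ∀ a : FreeAlgebra k (Fin 2), ∀ y : WeylAlgebra k,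
      tau μ ((RingQuot.mkAlgHom k (WeylRel k)) a * y)
        = tau μ (y * φ ((RingQuot.mkAlgHom k (WeylRel k)) a)) := by
    intro a
    induction a using FreeAlgebra.induction with
    | grade0 r =>
      intro y
      rw [AlgHom.commutes, AlgEquiv.commutes, Algebra.commutes]
    | grade1 i =>
      by_cases hi : i = 0
      · subst hi
        intro y
        show tau μ (Wp k * y) = tau μ (y * φ (Wp k))
        rw [tau_P h1 y, hp, mul_smul_comm, tau_smul h1]
      · rw [Fin.eq_one_of_ne_zero i hi]
        intro y
        show tau μ (Wq k * y) = tau μ (y * φ (Wq k))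
        rw [hq, mul_smul_comm, tau_smul h1, tau_Q h1 y, inv_mul_cancel_left₀ h0]
    | mul a b ha hb =>
      intro y
      rw [map_mul, map_mul, mul_assoc, ha, mul_assoc, hb, mul_assoc]
    | add a b ha hb =>
      intro y
      rw [map_add, map_add, add_mul, mul_add, tau_add h1, tau_add h1, ha, hb]
  intro x y
  obtain ⟨a, rfl⟩ := RingQuot.mkAlgHom_surjective k (WeylRel k) x
  exact main a y

end Weyl

end WeylNotIsoAux
end

/-- For a primitive `ℓ`-th root of unity `μ ∈ k` (`ℓ ≥ 2`), the fixed
ring of the first Weyl algebra `A₁(k)` under the automorphism `p ↦ μp`, `q ↦ μ⁻¹q`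
is not isomorphic to `A₁(k)`. -/
theorem weyl_fixed_ring_not_iso (k : Type*) [Field k] [IsAlgClosed k] [CharZero k]
    (ℓ : ℕ) (hℓ : 2 ≤ ℓ) (μ : k) (hμ : IsPrimitiveRoot μ ℓ)
    (φ : WeylAlgebra k ≃ₐ[k] WeylAlgebra k)
    (hp : φ (Wp k) = μ • Wp k) (hq : φ (Wq k) = μ⁻¹ • Wq k) :
    ¬ Nonempty
      ((AlgHom.equalizer (φ : WeylAlgebra k →ₐ[k] WeylAlgebra k) (AlgHom.id k _)) ≃ₐ[k]
        WeylAlgebra k) := by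
  open WeylNotIsoAux in
  rintro ⟨ψ⟩
  have hμ1 : μ ≠ 1 := hμ.ne_one (by omega)
  have hμ0 : μ ≠ 0 := hμ.ne_zero (by omega)
  have hrel : Wq k * Wp k = Wp k * Wq k + 1 := by
    have h := RingQuot.mkAlgHom_rel k (WeylRel.qp (k := k))
    rw [map_mul, map_add, map_one, map_mul] at h
    exact h
  set x0 := ψ.symm (Wp k) with hx0
  set y0 := ψ.symm (Wq k) with hy0
  have h11 : y0 * x0 = x0 * y0 + 1 := by
    apply ψ.injective
    rw [map_mul, map_add, map_mul, map_one, AlgEquiv.apply_symm_apply,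
      AlgEquiv.apply_symm_apply, hrel]
  have h12 : (y0 : WeylAlgebra k) * (x0 : WeylAlgebra k)
      = (x0 : WeylAlgebra k) * (y0 : WeylAlgebra k) + 1 := by
    have h := Subtype.ext_iff.mp h11
    simpa using h
  have hfy : φ ((y0 : WeylAlgebra k)) = (y0 : WeylAlgebra k) := by
    have h := y0.2
    rw [AlgHom.mem_equalizer] at h
    simpa using h
  have twist := WeylNotIsoAux.tau_twist hμ1 hμ0 φ hp hq
  have e1 : WeylNotIsoAux.tau μ ((y0 : WeylAlgebra k) * (x0 : WeylAlgebra k))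
      = WeylNotIsoAux.tau μ ((x0 : WeylAlgebra k) * (y0 : WeylAlgebra k)) := by
    rw [twist (y0 : WeylAlgebra k) (x0 : WeylAlgebra k), hfy]
  rw [h12, WeylNotIsoAux.tau_add hμ1, WeylNotIsoAux.tau_one hμ1] at e1
  have h0 : (1 - μ)⁻¹ = 0 := by linear_combination e1
  have h1 : (1 : k) - μ = 0 := inv_eq_zero.mp h0
  exact hμ1 (by linear_combination -h1)
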